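/- Let L ≥ 2, x ∈ {1,…,L−1} with x ∤ L, and write x̂ = L mod x. If a ∈ {0,…,2^L−1} satisfies a ⋘_L x = a, then the x-bit word A = Σ_{i=0}^{x−1} a_i·2^i satisfies A ⋘_x x̂ = A (a reduction of the fixed-shift equation to a smaller block length). -/
import Mathlib


/-- L-bit left circular shift of `a` by `x`. -/
def rotl (L : ℕ) (x : ℤ) (a : ℕ) : ℕ :=
  ∑ i ∈ Finset.range L, if a.testBit i then 2 ^ ((((i : ℤ) + x) % (L : ℤ)).toNat) else 0

/-- L-bit right circular shift of `a` by `x`. -/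
def rotr (L : ℕ) (x : ℤ) (a : ℕ) : ℕ := rotl L (-x) a

open Finset

lemma sumbits_lt (L : ℕ) (b : ℕ → Bool) :
    (∑ j ∈ range L, if b j then 2 ^ j else 0) < 2 ^ L := by
  induction L with
  | zero => simp
  | succ n ih =>
    rw [Finset.sum_range_succ, pow_succ]
    have : (if b n then 2 ^ n else 0) ≤ 2 ^ n := by split <;> simp
    omega

lemma sumbits_testBit (L : ℕ) (b : ℕ → Bool) (k : ℕ) :
    (∑ j ∈ range L, if b j then 2 ^ j else 0).testBit k = (decide (k < L) && b k) := by
  induction L with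
  | zero => simp
  | succ n ih =>
    rw [Finset.sum_range_succ]
    have hlt := sumbits_lt n b
    have : (∑ j ∈ range n, if b j then 2 ^ j else 0) + (if b n then 2 ^ n else 0)
        = 2 ^ n * (if b n then 1 else 0) + (∑ j ∈ range n, if b j then 2 ^ j else 0) := by
      split <;> ring
    rw [this, Nat.testBit_two_pow_mul_add _ hlt]
    split
    · rename_i h; rw [ih]; simp [h, Nat.lt_succ_of_lt h]
    · rename_i h
      push_neg at h
      rcases eq_or_lt_of_le h with h' | h'
      · subst h'
        simp only [Nat.sub_self]
        cases hb : b n <;> simp [hb]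
      · have hsm : (if b n then 1 else 0) < 2 ^ (k - n) := by
          have : 1 < 2 ^ (k - n) := Nat.one_lt_two_pow (by omega)
          split <;> omega
        rw [Nat.testBit_lt_two_pow hsm]
        simp; omega

lemma emod_toNat_lt (L : ℕ) (hL : 0 < L) (z : ℤ) : (z % (L : ℤ)).toNat < L := by
  have h1 : 0 ≤ z % (L : ℤ) := Int.emod_nonneg _ (by exact_mod_cast hL.ne')
  have h2 : z % (L : ℤ) < L := Int.emod_lt_of_pos _ (by exact_mod_cast hL)
  omega

lemma tau_sigma (L : ℕ) (hL : 0 < L) (x : ℤ) (i : ℕ) (hi : i < L) :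
    ((((((i : ℤ) + x) % (L : ℤ)).toNat : ℤ) - x) % (L : ℤ)).toNat = i := by
  have h1 : 0 ≤ ((i : ℤ) + x) % (L : ℤ) := Int.emod_nonneg _ (by exact_mod_cast hL.ne')
  rw [Int.toNat_of_nonneg h1]
  have h2 : (((i : ℤ) + x) % (L : ℤ) - x) % (L : ℤ) = (i : ℤ) % L := by
    rw [Int.sub_emod, Int.emod_emod_of_dvd _ dvd_rfl, ← Int.sub_emod, add_sub_cancel_right]
  rw [h2, Int.emod_eq_of_lt (by positivity) (by exact_mod_cast hi)]
  simp

lemma sigma_tau (L : ℕ) (hL : 0 < L) (x : ℤ) (j : ℕ) (hj : j < L) :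
    ((((((j : ℤ) - x) % (L : ℤ)).toNat : ℤ) + x) % (L : ℤ)).toNat = j := by
  have h1 : 0 ≤ ((j : ℤ) - x) % (L : ℤ) := Int.emod_nonneg _ (by exact_mod_cast hL.ne')
  rw [Int.toNat_of_nonneg h1]
  have h2 : (((j : ℤ) - x) % (L : ℤ) + x) % (L : ℤ) = (j : ℤ) % L := by
    rw [Int.add_emod, Int.emod_emod_of_dvd _ dvd_rfl, ← Int.add_emod, sub_add_cancel]
  rw [h2, Int.emod_eq_of_lt (by positivity) (by exact_mod_cast hj)]
  simp

lemma testBit_rotl (L : ℕ) (hL : 0 < L) (x : ℤ) (a : ℕ) (k : ℕ) :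
    (rotl L x a).testBit k
      = (decide (k < L) && a.testBit ((((k : ℤ) - x) % (L : ℤ)).toNat)) := by
  have hre : rotl L x a
      = ∑ j ∈ Finset.range L, if a.testBit ((((j : ℤ) - x) % (L : ℤ)).toNat) then 2 ^ j else 0 := by
    unfold rotl
    refine Finset.sum_nbij' (fun i => ((((i : ℤ) + x) % (L : ℤ)).toNat))
      (fun j => ((((j : ℤ) - x) % (L : ℤ)).toNat)) ?_ ?_ ?_ ?_ ?_
    · intro i hi
      simp only [Finset.mem_range] at *
      exact emod_toNat_lt L hL _
    · intro j hj
      simp only [Finset.mem_range] at *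
      exact emod_toNat_lt L hL _
    · intro i hi
      simp only [Finset.mem_range] at hi
      exact tau_sigma L hL x i hi
    · intro j hj
      simp only [Finset.mem_range] at hj
      exact sigma_tau L hL x j hj
    · intro i hi
      simp only [Finset.mem_range] at hi
      rw [tau_sigma L hL x i hi]
  rw [hre, sumbits_testBit]

lemma cast_trick (L x : ℕ) (hL : 0 < L) (i : ℕ) (hi : i < L) :
    (((((i + x) % L : ℕ) : ℤ) - (x : ℤ)) % (L : ℤ)).toNat = i := by
  have e1 : (((i + x) % L : ℕ) : ℤ) = ((i : ℤ) + x) % (L : ℤ) := by push_cast; ring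
  have e2 := tau_sigma L hL (x : ℤ) i hi
  rw [Int.toNat_of_nonneg (Int.emod_nonneg _ (by exact_mod_cast hL.ne'))] at e2
  rw [e1]; exact e2

theorem stmt19 (L x : ℕ) (hL : 2 ≤ L) (hx1 : 1 ≤ x) (hx2 : x ≤ L - 1) (hndvd : ¬ x ∣ L)
    (a : ℕ) (ha : a < 2 ^ L) (hfix : rotl L (x : ℤ) a = a) :
    rotl x ((L % x : ℕ) : ℤ) (a % 2 ^ x) = a % 2 ^ x := by
  have hx : 0 < x := hx1
  have hxL : x < L := by omega
  have hL0 : 0 < L := by omega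
  -- basic bit relation from the fixed point equation
  have hbit : ∀ i, i < L → a.testBit ((i + x) % L) = a.testBit i := by
    intro i hi
    have h := congrArg (fun n => n.testBit ((i + x) % L)) hfix
    simp only [testBit_rotl L hL0 (x : ℤ) a] at h
    have hm : (i + x) % L < L := Nat.mod_lt _ hL0
    rw [cast_trick L x hL0 i hi] at h
    simp only [decide_eq_true hm, Bool.true_and] at h
    exact h.symm
  -- iterated bit relation
  have hiter : ∀ k i, i < L → a.testBit ((i + k * x) % L) = a.testBit i := by
    intro k
    induction k with
    | zero => intro i hi; simp [Nat.mod_eq_of_lt hi]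
    | succ k ih =>
      intro i hi
      have e : (i + (k + 1) * x) % L = (((i + k * x) % L) + x) % L := by
        conv_lhs => rw [show i + (k + 1) * x = (i + k * x) + x by ring]
        rw [Nat.add_mod, Nat.mod_eq_of_lt hxL]
      rw [e, hbit _ (Nat.mod_lt _ hL0), ih i hi]
  -- key relation at block length x
  have hkey : ∀ i, i < x → a.testBit i = a.testBit ((i + L % x) % x) := by
    intro i hi
    set j := (i + L % x) % x with hj
    have hjx : j < x := Nat.mod_lt _ hx
    have hdm1 := Nat.div_add_mod (i + L % x) x
    have hdm2 := Nat.div_add_mod L x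
    set k := (i + L % x) / x + L / x with hk
    have hkx : k * x = x * ((i + L % x) / x) + x * (L / x) := by rw [hk]; ring
    have hsum : j + k * x = i + L := by omega
    have h := hiter k j (lt_trans hjx hxL)
    rw [hsum, Nat.add_mod_right, Nat.mod_eq_of_lt (lt_trans hi hxL)] at h
    exact h
  -- conclude by comparing bits
  refine Nat.eq_of_testBit_eq fun p => ?_
  rw [testBit_rotl x hx ((L % x : ℕ) : ℤ) (a % 2 ^ x) p, Nat.testBit_mod_two_pow]
  by_cases hp : p < x
  · simp only [decide_eq_true hp, Bool.true_and]
    have hq : ((((p : ℤ) - ((L % x : ℕ) : ℤ)) % (x : ℤ)).toNat) < x := emod_toNat_lt x hx _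
    rw [Nat.testBit_mod_two_pow]
    simp only [decide_eq_true hq, Bool.true_and]
    set q := (((p : ℤ) - ((L % x : ℕ) : ℤ)) % (x : ℤ)).toNat with hqdef
    have hqp : (q + L % x) % x = p := by
      have hst := sigma_tau x hx ((L % x : ℕ) : ℤ) p hp
      have e : (((q + L % x) % x : ℕ) : ℤ) = ((q : ℤ) + ((L % x : ℕ) : ℤ)) % (x : ℤ) := by
        push_cast; ring
      calc (q + L % x) % x = ((((q + L % x) % x : ℕ) : ℤ)).toNat := (Int.toNat_natCast _).symm
        _ = (((q : ℤ) + ((L % x : ℕ) : ℤ)) % (x : ℤ)).toNat := by rw [e]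
        _ = p := hst
    have h := hkey q hq
    rw [hqp] at h
    simp [hp, h]
  · simp [hp]
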